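/- Define the multivariate Hermite basis polynomial H_{(a,k)}(x₁,…,xₙ) = ∏_{i=1}^n (xᵢ − aᵢ)^{kᵢ} H_{aᵢ}(xᵢ) / kᵢ! for a grid point a and multi-index k with 0 ≤ kᵢ ≤ νᵢ(aᵢ) − 1. Then for any grid point b ≠ a and any multi-index m with 0 ≤ mᵢ ≤ νᵢ(bᵢ) − 1, the mixed partial derivative ∂^m H_{(a,k)} evaluated at b is zero. -/
import Mathlib


open MvPolynomial

/-- The univariate Hermite factor `H_{aᵢ}` placed in variable `i`. -/
noncomputable def hermiteFactor {n : ℕ} (A : Fin n → Finset ℝ) (ν : Fin n → ℝ → ℕ)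
    (i : Fin n) (ai : ℝ) : MvPolynomial (Fin n) ℝ :=
  ∏ c ∈ (A i).erase ai, (C ((ai - c)⁻¹) * (X i - C c)) ^ ν i c

/-- The multivariate Hermite basis polynomial
`H_{(a,k)}(x) = ∏ᵢ (xᵢ - aᵢ)^{kᵢ} H_{aᵢ}(xᵢ) / kᵢ!`. -/
noncomputable def hermiteBasis {n : ℕ} (A : Fin n → Finset ℝ) (ν : Fin n → ℝ → ℕ)
    (a : Fin n → ℝ) (k : Fin n → ℕ) : MvPolynomial (Fin n) ℝ :=
  ∏ i, (C ((1 : ℝ) / (k i).factorial) * (X i - C (a i)) ^ (k i) *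
      hermiteFactor A ν i (a i))

/-- The mixed partial derivative operator `∂^m = ∏ᵢ ∂ᵢ^{mᵢ}`. -/
noncomputable def mixedPderiv {n : ℕ} (m : Fin n → ℕ)
    (p : MvPolynomial (Fin n) ℝ) : MvPolynomial (Fin n) ℝ :=
  (List.finRange n).foldr (fun i q => (fun r => pderiv i r)^[m i] q) p

lemma pderiv_linear_ne {n : ℕ} {i j : Fin n} (h : i ≠ j) (c : ℝ) :
    pderiv i ((X j : MvPolynomial (Fin n) ℝ) - C c) = 0 := by
  simp [pderiv_X_of_ne h.symm]

lemma pd_dvd_ne {n : ℕ} {i j : Fin n} (h : i ≠ j) {c : ℝ} {t : ℕ}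
    {p : MvPolynomial (Fin n) ℝ} (hd : (X j - C c) ^ t ∣ p) :
    (X j - C c) ^ t ∣ pderiv i p := by
  obtain ⟨q, rfl⟩ := hd
  rw [pderiv_mul, pderiv_pow, pderiv_linear_ne h, mul_zero, zero_mul, zero_add]
  exact Dvd.intro _ rfl

lemma pd_dvd_eq {n : ℕ} {j : Fin n} {c : ℝ} {t : ℕ}
    {p : MvPolynomial (Fin n) ℝ} (hd : (X j - C c) ^ (t + 1) ∣ p) :
    (X j - C c) ^ t ∣ pderiv j p := by
  obtain ⟨q, rfl⟩ := hd
  rw [pderiv_mul, pderiv_pow]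
  have hX : pderiv j ((X j : MvPolynomial (Fin n) ℝ) - C c) = 1 := by
    simp
  rw [hX, mul_one]
  refine dvd_add ?_ ?_
  · simp only [Nat.add_sub_cancel]
    exact dvd_mul_of_dvd_left (dvd_mul_left _ _) q
  · exact dvd_mul_of_dvd_left (pow_dvd_pow _ (Nat.le_succ t)) _

lemma pd_iter_ne {n : ℕ} {i j : Fin n} (h : i ≠ j) {c : ℝ} {t : ℕ} (r : ℕ)
    {p : MvPolynomial (Fin n) ℝ} (hd : (X j - C c) ^ t ∣ p) :
    (X j - C c) ^ t ∣ (fun q => pderiv i q)^[r] p := by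
  induction r generalizing p with
  | zero => exact hd
  | succ r ih => rw [Function.iterate_succ_apply]; exact ih (pd_dvd_ne h hd)

lemma pd_iter_eq {n : ℕ} {j : Fin n} {c : ℝ} (s r : ℕ)
    {p : MvPolynomial (Fin n) ℝ} (hd : (X j - C c) ^ (s + r) ∣ p) :
    (X j - C c) ^ s ∣ (fun q => pderiv j q)^[r] p := by
  induction r generalizing p with
  | zero => exact hd
  | succ r ih =>
    rw [Function.iterate_succ_apply]
    exact ih (pd_dvd_eq (by rwa [Nat.add_succ] at hd))

lemma foldr_dvd {n : ℕ} (m : Fin n → ℕ) {j : Fin n} {c : ℝ}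
    (L : List (Fin n)) (hL : L.Nodup) (s : ℕ)
    {p : MvPolynomial (Fin n) ℝ}
    (hd : (X j - C c) ^ (s + (if j ∈ L then m j else 0)) ∣ p) :
    (X j - C c) ^ s ∣ L.foldr (fun i q => (fun r => pderiv i r)^[m i] q) p := by
  induction L generalizing s with
  | nil => simpa using hd
  | cons i L ih =>
    rw [List.foldr_cons]
    rcases List.nodup_cons.mp hL with ⟨hi, hLnd⟩
    by_cases hij : i = j
    · subst hij
      have hjL : i ∉ L := hi
      have h1 : (X i - C c) ^ (s + m i) ∣
          L.foldr (fun i q => (fun r => pderiv i r)^[m i] q) p :=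
        ih hLnd (s + m i) (by simpa [hjL] using hd)
      exact pd_iter_eq s (m i) h1
    · apply pd_iter_ne hij
      apply ih hLnd
      simpa [List.mem_cons, Ne.symm hij] using hd

theorem hermite_basis_mixed_deriv_vanishes_at_other_point
    {n : ℕ} (A : Fin n → Finset ℝ) (ν : Fin n → ℝ → ℕ)
    (hν : ∀ i, ∀ x ∈ A i, 1 ≤ ν i x)
    (a b : Fin n → ℝ) (ha : ∀ i, a i ∈ A i) (hb : ∀ i, b i ∈ A i)
    (hab : a ≠ b)
    (k m : Fin n → ℕ)
    (hk : ∀ i, k i ≤ ν i (a i) - 1) (hm : ∀ i, m i ≤ ν i (b i) - 1) :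
    eval b (mixedPderiv m (hermiteBasis A ν a k)) = 0 := by
  obtain ⟨j, hj⟩ : ∃ j, a j ≠ b j := by
    by_contra h
    push_neg at h
    exact hab (funext h)
  set N := ν j (b j) with hN
  have hN1 : 1 ≤ N := hν j (b j) (hb j)
  have hmj : m j ≤ N - 1 := hm j
  set s := N - m j with hs
  have hs1 : 1 ≤ s := by omega
  have hsum : s + m j = N := by omega
  -- initial divisibility
  have hbase : (X j - C (b j)) ^ N ∣ hermiteBasis A ν a k := by
    have hmem : b j ∈ (A j).erase (a j) :=
      Finset.mem_erase.mpr ⟨hj.symm, hb j⟩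
    have h1 : (C ((a j - b j)⁻¹) * (X j - C (b j))) ^ N ∣
        hermiteFactor A ν j (a j) :=
      Finset.dvd_prod_of_mem _ hmem
    have h2 : (X j - C (b j)) ^ N ∣
        (C ((a j - b j)⁻¹) * (X j - C (b j))) ^ N :=
      pow_dvd_pow_of_dvd (dvd_mul_left _ _) N
    have h3 : hermiteFactor A ν j (a j) ∣ hermiteBasis A ν a k :=
      dvd_mul_left _ _ |>.trans (Finset.dvd_prod_of_mem _ (Finset.mem_univ j))
    exact (h2.trans h1).trans h3
  have hdvd : (X j - C (b j)) ^ s ∣ mixedPderiv m (hermiteBasis A ν a k) := by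
    unfold mixedPderiv
    apply foldr_dvd m _ (List.nodup_finRange n) s
    rw [if_pos (List.mem_finRange j), hsum]
    exact hbase
  obtain ⟨q, hq⟩ := hdvd
  rw [hq, eval_mul, eval_pow]
  simp [zero_pow (by omega : s ≠ 0)]
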